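/- Let $J_n$ be the $np \times np$ Hermitian block tridiagonal matrix with diagonal blocks $\mathcal{B}_1, \ldots, \mathcal{B}_n$ and off-diagonal blocks $\tilde{\mathcal{A}}_1, \ldots, \tilde{\mathcal{A}}_{n-1}$ arising from a matrix measure on $[0,1]$ with canonical moments $U_1, \ldots, U_{2n-1}$ satisfying $\mathbf{0} < U_k < \mathbf{1}$. Then $\det(I_{np} - J_n) = \prod_{k=1}^{2n-1} \det(\mathbf{1} - U_k)$. -/

import Mathlib

open Matrix
open scoped ComplexOrder

namespace DBJ

variable {α : Type*} [AddCommMonoid α]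

lemma sum_if_val {n : ℕ} (m : ℕ) (F : Fin n → α) :
    (∑ k : Fin n, if (k : ℕ) = m then F k else 0) = if h : m < n then F ⟨m, h⟩ else 0 := by
  split
  · next h =>
    rw [Finset.sum_eq_single ⟨m, h⟩]
    · simp
    · intro k _ hk; rw [if_neg]; intro hv; exact hk (Fin.ext hv)
    · simp
  · next h =>
    apply Finset.sum_eq_zero; intro k _
    rw [if_neg]; intro hv; exact h (hv ▸ k.isLt)

lemma sum_if_val' {n : ℕ} (m : ℕ) (F : Fin n → α) :
    (∑ k : Fin n, if m = (k : ℕ) + 1 then F k else 0)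
      = if h : m - 1 < n ∧ 1 ≤ m then F ⟨m - 1, h.1⟩ else 0 := by
  split
  · next h =>
    rw [Finset.sum_eq_single ⟨m - 1, h.1⟩]
    · rw [if_pos]; simp only [Fin.val_mk]; omega
    · intro k _ hk; rw [if_neg]; intro hv
      exact hk (Fin.ext (by simp only [Fin.val_mk]; omega))
    · simp
  · next h =>
    apply Finset.sum_eq_zero; intro k _
    rw [if_neg]; intro hv
    exact h ⟨by omega, by omega⟩

lemma if_sum {β : Type*} (P : Prop) [Decidable P] {s : Finset β} (f : β → α) :
    (∑ c ∈ s, if P then f c else 0) = if P then ∑ c ∈ s, f c else 0 := by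
  split <;> simp

/-- block matrix with block `f i` at block position `(i, i+t)` -/
def od (n p t : ℕ) (f : ℕ → Matrix (Fin p) (Fin p) ℂ) :
    Matrix (Fin n × Fin p) (Fin n × Fin p) ℂ :=
  Matrix.of fun x y => if (y.1 : ℕ) = (x.1 : ℕ) + t then f (x.1 : ℕ) x.2 y.2 else 0

/-- block matrix with block `f i` at block position `(i+1, i)` -/
def lo (n p : ℕ) (f : ℕ → Matrix (Fin p) (Fin p) ℂ) :
    Matrix (Fin n × Fin p) (Fin n × Fin p) ℂ :=
  Matrix.of fun x y => if (x.1 : ℕ) = (y.1 : ℕ) + 1 then f (y.1 : ℕ) x.2 y.2 else 0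

variable {n p : ℕ}

lemma od_mul_od (t s : ℕ) (f g : ℕ → Matrix (Fin p) (Fin p) ℂ) :
    od n p t f * od n p s g = od n p (t + s) (fun i => f i * g (i + t)) := by
  ext ⟨i, a⟩ ⟨j, b⟩
  rw [Matrix.mul_apply, Fintype.sum_prod_type]
  simp only [od, Matrix.of_apply]
  simp only [ite_mul, zero_mul]
  simp only [mul_ite, mul_zero]
  simp only [if_sum]
  rw [sum_if_val]
  split
  · next h =>
    simp only []
    split
    · next h2 =>
      rw [if_pos (by omega)]
      rw [Matrix.mul_apply]
    · next h2 =>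
      rw [if_neg (by omega)]
  · next h =>
    rw [if_neg (by have := j.isLt; omega)]


lemma lo_mul_od0 (f g : ℕ → Matrix (Fin p) (Fin p) ℂ) :
    lo n p f * od n p 0 g = lo n p (fun i => f i * g i) := by
  ext ⟨i, a⟩ ⟨j, b⟩
  rw [Matrix.mul_apply, Fintype.sum_prod_type]
  simp only [lo, od, Matrix.of_apply]
  simp only [ite_mul, zero_mul]
  simp only [mul_ite, mul_zero]
  simp only [if_sum]
  rw [sum_if_val']
  split
  · next h =>
    simp only [Fin.val_mk]
    by_cases hij : (i : ℕ) = (j : ℕ) + 1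
    · have hji : (j:ℕ) = (i:ℕ) - 1 := by omega
      rw [if_pos (show (j:ℕ) = (i:ℕ) - 1 + 0 by omega), if_pos hij, hji, Matrix.mul_apply]
    · rw [if_neg (show ¬ (j:ℕ) = (i:ℕ) - 1 + 0 by omega), if_neg hij]
  · next h =>
    rw [if_neg (fun hij => h ⟨by have := i.isLt; omega, by omega⟩)]

lemma lo_mul_od1 (f g : ℕ → Matrix (Fin p) (Fin p) ℂ) :
    lo n p f * od n p 1 g
      = od n p 0 (fun i => if i = 0 then 0 else f (i - 1) * g (i - 1)) := by
  ext ⟨i, a⟩ ⟨j, b⟩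
  rw [Matrix.mul_apply, Fintype.sum_prod_type]
  simp only [lo, od, Matrix.of_apply]
  simp only [ite_mul, zero_mul]
  simp only [mul_ite, mul_zero]
  simp only [if_sum]
  rw [sum_if_val']
  split
  · next h =>
    simp only [Fin.val_mk, add_zero]
    by_cases hij : (j : ℕ) = (i : ℕ)
    · rw [if_pos (show (j:ℕ) = (i:ℕ) - 1 + 1 by omega), if_pos hij,
        if_neg (show ¬ (i:ℕ) = 0 by omega), Matrix.mul_apply]
    · rw [if_neg (show ¬ (j:ℕ) = (i:ℕ) - 1 + 1 by omega), if_neg hij]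
  · next h =>
    have hi0 : (i : ℕ) = 0 := by have := i.isLt; omega
    simp only [add_zero]
    by_cases hij : (j : ℕ) = (i : ℕ)
    · rw [if_pos hij, if_pos hi0]; simp
    · rw [if_neg hij]

lemma od0_mul_lo (f g : ℕ → Matrix (Fin p) (Fin p) ℂ) :
    od n p 0 f * lo n p g = lo n p (fun i => f (i + 1) * g i) := by
  ext ⟨i, a⟩ ⟨j, b⟩
  rw [Matrix.mul_apply, Fintype.sum_prod_type]
  simp only [lo, od, Matrix.of_apply]
  simp only [ite_mul, zero_mul]
  simp only [mul_ite, mul_zero]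
  simp only [if_sum]
  rw [sum_if_val]
  split
  · next h =>
    simp only [Fin.val_mk, add_zero]
    by_cases hij : (i : ℕ) = (j : ℕ) + 1
    · rw [if_pos hij, if_pos hij, hij, Matrix.mul_apply]
    · rw [if_neg hij, if_neg hij]
  · next h => exact absurd (by have := i.isLt; omega : (i:ℕ) + 0 < n) h

lemma od_add (t : ℕ) (f g : ℕ → Matrix (Fin p) (Fin p) ℂ) :
    od n p t f + od n p t g = od n p t (fun i => f i + g i) := by
  ext ⟨i, a⟩ ⟨j, b⟩
  simp only [od, Matrix.add_apply, Matrix.of_apply]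
  split <;> simp

lemma od_one : od n p 0 (fun _ => 1) = 1 := by
  ext ⟨i, a⟩ ⟨j, b⟩
  simp only [od, Matrix.of_apply, Matrix.one_apply, Prod.mk.injEq, add_zero]
  by_cases hij : i = j
  · subst hij; simp [Matrix.one_apply]
  · rw [if_neg (fun hh => hij (Fin.ext (Eq.symm hh))), if_neg (by tauto)]

lemma od_congr (t : ℕ) {f g : ℕ → Matrix (Fin p) (Fin p) ℂ} (h : ∀ i, f i = g i) :
    od n p t f = od n p t g := by
  have : f = g := funext h
  rw [this]

lemma lo_congr {f g : ℕ → Matrix (Fin p) (Fin p) ℂ} (h : ∀ i, f i = g i) :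
    lo n p f = lo n p g := by
  have : f = g := funext h
  rw [this]


lemma det_toSquareBlock (M : Matrix (Fin n × Fin p) (Fin n × Fin p) ℂ) (k : Fin n)
    (N : Matrix (Fin p) (Fin p) ℂ) (hN : ∀ a b, M (k, a) (k, b) = N a b) :
    (M.toSquareBlock Prod.fst k).det = N.det := by
  let e : Fin p ≃ {x : Fin n × Fin p // x.1 = k} :=
    ⟨fun a => ⟨(k, a), rfl⟩, fun x => x.1.2, fun a => rfl,
      fun x => Subtype.ext (Prod.ext x.2.symm rfl)⟩
  rw [← Matrix.det_submatrix_equiv_self e]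
  congr 1
  ext a b
  simp only [Matrix.submatrix_apply, Matrix.toSquareBlock, Matrix.toSquareBlockProp,
    Matrix.toBlock, Matrix.of_apply, Equiv.coe_fn_mk]
  show M ((k,a)) ((k,b)) = N a b
  exact hN a b

lemma det_tri_upper (f w : ℕ → Matrix (Fin p) (Fin p) ℂ) :
    (od n p 0 f + od n p 1 w).det = ∏ i : Fin n, (f (i : ℕ)).det := by
  have hbt : (od n p 0 f + od n p 1 w).BlockTriangular Prod.fst := by
    intro x y hlt
    have hlt' : (y.1 : ℕ) < (x.1 : ℕ) := hlt
    simp only [Matrix.add_apply, od, Matrix.of_apply]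
    rw [if_neg (by omega), if_neg (by omega), add_zero]
  rw [hbt.det_fintype]
  refine Finset.prod_congr rfl fun k _ => ?_
  refine det_toSquareBlock _ _ _ fun a b => ?_
  simp only [Matrix.add_apply, od, Matrix.of_apply]
  rw [if_pos (by omega), if_neg (by omega), add_zero]

lemma det_tri_lower (f c : ℕ → Matrix (Fin p) (Fin p) ℂ) :
    (od n p 0 f + lo n p c).det = ∏ i : Fin n, (f (i : ℕ)).det := by
  rw [← Matrix.det_transpose]
  have hbt : ((od n p 0 f + lo n p c)ᵀ).BlockTriangular Prod.fst := by
    intro x y hlt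
    have hlt' : (y.1 : ℕ) < (x.1 : ℕ) := hlt
    simp only [Matrix.transpose_apply, Matrix.add_apply, od, lo, Matrix.of_apply]
    rw [if_neg (by omega), if_neg (by omega), add_zero]
  rw [hbt.det_fintype]
  refine Finset.prod_congr rfl fun k _ => ?_
  rw [det_toSquareBlock _ k (f (k : ℕ))ᵀ ?_, Matrix.det_transpose]
  intro a b
  simp only [Matrix.transpose_apply, Matrix.add_apply, od, lo, Matrix.of_apply]
  rw [if_pos (by omega), if_neg (by omega), add_zero]

lemma prod_aux (d : ℕ → ℂ) :
    ∀ m : ℕ, 1 ≤ m →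
      (∏ i ∈ Finset.range m, (if i = 0 then d 1 else d (2 * i) * d (2 * i + 1)))
        = ∏ k ∈ Finset.Icc 1 (2 * m - 1), d k := by
  intro m
  induction m with
  | zero => omega
  | succ m ih =>
    intro _
    by_cases hm : 1 ≤ m
    · rw [Finset.prod_range_succ, ih hm]
      rw [show 2 * (m + 1) - 1 = (2 * m) + 1 by omega]
      rw [Finset.prod_Icc_succ_top (by omega), show (2 * m) = (2 * m - 1) + 1 by omega,
        Finset.prod_Icc_succ_top (by omega)]
      rw [if_neg (by omega), show 2 * m - 1 + 1 = 2 * m by omega]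
      ring
    · have hm0 : m = 0 := by omega
      subst hm0
      simp

end DBJ


/-- For the `np × np` Hermitian block Jacobi matrix `J_n` of a matrix measure on
`[0,1]` with canonical moments `U_1, …, U_{2n-1}` satisfying `0 < U_k < 1`,
one has `det(I_{np} - J_n) = ∏_{k=1}^{2n-1} det(1 - U_k)`.
Here `ζ, u, v` are the Dette–Studden decomposition of the recursion coefficients,
`γ_k` the Gram matrices (with `γ_0 = 1` and `γ_k = γ_{k-1} v_k`), `S_k` the positive
definite square root of `γ_k`, and `B_k = γ_{k-1}^{1/2} u_{k-1} γ_{k-1}^{-1/2}`,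
`Ã_k = γ_{k-1}^{-1/2} γ_k^{1/2}` the Hermitian (orthonormal) recursion coefficients. -/
theorem det_one_sub_block_jacobi (p n : ℕ) (hp : 0 < p) (hn : 0 < n)
    (U ζ u v γ S B A : ℕ → Matrix (Fin p) (Fin p) ℂ)
    (hU : ∀ k, 1 ≤ k → k ≤ 2 * n - 1 →
      (U k).PosDef ∧ ((1 : Matrix (Fin p) (Fin p) ℂ) - U k).PosDef)
    (hζ0 : ζ 0 = 0) (hζ1 : ζ 1 = U 1)
    (hζ : ∀ k, 2 ≤ k → ζ k = (1 - U (k - 1)) * U k)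
    (hu : ∀ k, u k = ζ (2 * k + 1) + ζ (2 * k))
    (hv : ∀ k, 1 ≤ k → v k = ζ (2 * k - 1) * ζ (2 * k))
    (hγ0 : γ 0 = 1)
    (hγ : ∀ k, 1 ≤ k → γ k = γ (k - 1) * v k)
    (hS : ∀ k, (S k).PosDef ∧ S k * S k = γ k)
    (hB : ∀ k, 1 ≤ k → B k = S (k - 1) * u (k - 1) * (S (k - 1))⁻¹)
    (hA : ∀ k, 1 ≤ k → A k = (S (k - 1))⁻¹ * S k)
    (J : Matrix (Fin n × Fin p) (Fin n × Fin p) ℂ)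
    (hJ : ∀ (i : Fin n) (a : Fin p) (j : Fin n) (b : Fin p),
      J (i, a) (j, b) =
        if i = j then B ((i : ℕ) + 1) a b
        else if (j : ℕ) = (i : ℕ) + 1 then A ((i : ℕ) + 1) a b
        else if (i : ℕ) = (j : ℕ) + 1 then (A ((j : ℕ) + 1))ᴴ a b
        else 0) :
    ((1 : Matrix (Fin n × Fin p) (Fin n × Fin p) ℂ) - J).det
      = ∏ k ∈ Finset.Icc 1 (2 * n - 1), ((1 : Matrix (Fin p) (Fin p) ℂ) - U k).det := by
  classical
  -- abbreviations
  set Gf : ℕ → Matrix (Fin p) (Fin p) ℂ :=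
    fun i => if i = 0 then 1 - U 1 else (1 - U (2 * i)) * (1 - U (2 * i + 1)) with hGfdef
  set wf : ℕ → Matrix (Fin p) (Fin p) ℂ :=
    fun i => -(U (2 * i + 1) * U (2 * i + 2)) with hwfdef
  have hdetS : ∀ k, IsUnit (S k).det := fun k => (Matrix.PosDef.det_pos (hS k).1).ne'.isUnit
  have hSH : ∀ k, (S k)ᴴ = S k := fun k => (hS k).1.1
  have hBexp : ∀ i : ℕ, B (i + 1) = S i * u i * (S i)⁻¹ := fun i => by
    simpa using hB (i + 1) (by omega)
  have hAexp : ∀ i : ℕ, A (i + 1) = (S i)⁻¹ * S (i + 1) := fun i => by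
    simpa using hA (i + 1) (by omega)
  have hζ2 : ∀ m : ℕ, ζ (2 * m + 2) = (1 - U (2 * m + 1)) * U (2 * m + 2) := fun m => by
    have h := hζ (2 * m + 2) (by omega)
    rwa [show 2 * m + 2 - 1 = 2 * m + 1 by omega] at h
  have hζ3 : ∀ m : ℕ, ζ (2 * m + 3) = (1 - U (2 * m + 2)) * U (2 * m + 3) := fun m => by
    have h := hζ (2 * m + 3) (by omega)
    rwa [show 2 * m + 3 - 1 = 2 * m + 2 by omega] at h
  have hvexp : ∀ i : ℕ, v (i + 1) = ζ (2 * i + 1) * ζ (2 * i + 2) := fun i => by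
    have h := hv (i + 1) (by omega)
    rwa [show 2 * (i + 1) - 1 = 2 * i + 1 by omega, show 2 * (i + 1) = 2 * i + 2 by omega] at h
  have hγexp : ∀ i : ℕ, S (i + 1) * S (i + 1) = S i * S i * v (i + 1) := fun i => by
    have h := hγ (i + 1) (by omega)
    simp only [Nat.add_sub_cancel] at h
    rw [(hS (i + 1)).2, (hS i).2, h]
  have hvS : ∀ i : ℕ, v (i + 1) = (S i)⁻¹ * ((S i)⁻¹ * (S (i + 1) * S (i + 1))) := fun i => by
    rw [hγexp i, Matrix.mul_assoc (S i) (S i) (v (i + 1)),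
      Matrix.nonsing_inv_mul_cancel_left _ _ (hdetS i),
      Matrix.nonsing_inv_mul_cancel_left _ _ (hdetS i)]
  -- block-level identities
  have idDiag : ∀ i : ℕ,
      Gf i + (if i = 0 then 0 else (-1 : Matrix (Fin p) (Fin p) ℂ) * wf (i - 1)) = 1 - u i := by
    intro i
    cases i with
    | zero =>
      simp only [hGfdef, if_pos rfl, add_zero]
      rw [hu 0, hζ0, hζ1]
      simp
    | succ m =>
      rw [hu (m + 1)]
      simp only [hGfdef, hwfdef, if_neg (Nat.succ_ne_zero m), Nat.add_sub_cancel]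
      rw [show 2 * (m + 1) = 2 * m + 2 by omega]
      rw [show 2 * m + 2 + 1 = 2 * m + 3 by omega, hζ2 m, hζ3 m]
      noncomm_ring
  have idSup : ∀ i : ℕ, Gf i * wf i = -(v (i + 1)) := by
    intro i
    rw [hvexp i]
    cases i with
    | zero =>
      simp only [hGfdef, hwfdef, if_pos rfl]
      rw [show (2 * 0 + 1 : ℕ) = 1 by omega, show (2 * 0 + 2 : ℕ) = 2 by omega, hζ1, hζ2 0]
      rw [show (2 * 0 + 1 : ℕ) = 1 by omega, show (2 * 0 + 2 : ℕ) = 2 by omega]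
      noncomm_ring
    | succ m =>
      simp only [hGfdef, hwfdef, if_neg (Nat.succ_ne_zero m)]
      have e4 : ζ (2 * m + 4) = (1 - U (2 * m + 3)) * U (2 * m + 4) := by
        have h := hζ (2 * m + 4) (by omega)
        rwa [show 2 * m + 4 - 1 = 2 * m + 3 by omega] at h
      rw [show 2 * (m + 1) = 2 * m + 2 by omega]
      rw [show 2 * m + 2 + 1 = 2 * m + 3 by omega, show 2 * m + 2 + 2 = 2 * m + 4 by omega,
        hζ3 m, e4]
      noncomm_ring
  have idD2 : ∀ i : ℕ, S i * (1 - u i) * (S i)⁻¹ = 1 - B (i + 1) := fun i => by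
    rw [hBexp i, Matrix.mul_sub, Matrix.mul_one, Matrix.sub_mul,
      Matrix.mul_nonsing_inv _ (hdetS i)]
  have idS2 : ∀ i : ℕ, S i * (-(v (i + 1))) * (S (i + 1))⁻¹ = -(A (i + 1)) := fun i => by
    rw [hAexp i, Matrix.mul_neg, Matrix.neg_mul, hvS i,
      Matrix.mul_nonsing_inv_cancel_left _ _ (hdetS i), Matrix.mul_assoc,
      Matrix.mul_assoc (S (i + 1)) (S (i + 1)) ((S (i + 1))⁻¹),
      Matrix.mul_nonsing_inv _ (hdetS (i + 1)), Matrix.mul_one]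
  have idL2 : ∀ i : ℕ,
      S (i + 1) * (-1 : Matrix (Fin p) (Fin p) ℂ) * (S i)⁻¹ = -((A (i + 1))ᴴ) := fun i => by
    rw [hAexp i, Matrix.conjTranspose_mul, Matrix.conjTranspose_nonsing_inv, hSH, hSH i,
      Matrix.mul_neg, Matrix.mul_one, Matrix.neg_mul]
  open DBJ in
  -- matrix assembly
  have hDmDi : od n p 0 (fun i => S i) * od n p 0 (fun i => (S i)⁻¹) = 1 := by
    rw [od_mul_od]
    rw [show (fun i => S i * (S (i + 0))⁻¹) = (fun _ : ℕ => (1 : Matrix (Fin p) (Fin p) ℂ))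
      from funext fun i => Matrix.mul_nonsing_inv _ (hdetS i)]
    exact od_one
  have hcomb : od n p 0 Gf
        + od n p 0 (fun i => if i = 0 then 0 else (-1 : Matrix (Fin p) (Fin p) ℂ) * wf (i - 1))
      = od n p 0 (fun i => 1 - u i) := by
    rw [od_add]
    exact od_congr 0 idDiag
  have hLU : (od n p 0 Gf + lo n p (fun _ => -1))
        * (od n p 0 (fun _ => 1) + od n p 1 wf)
      = od n p 0 (fun i => 1 - u i) + od n p 1 (fun i => -(v (i + 1)))
        + lo n p (fun _ => -1) := by
    rw [add_mul, mul_add, mul_add, od_mul_od, od_mul_od, lo_mul_od0, lo_mul_od1]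
    simp only [add_zero, zero_add, mul_one, Nat.add_eq, Nat.add_zero]
    rw [show (fun i => Gf i * wf i) = (fun i : ℕ => -(v (i + 1)))
      from funext fun i => idSup i]
    rw [← hcomb]
    abel
  have hM : od n p 0 (fun i => S i)
        * ((od n p 0 Gf + lo n p (fun _ => -1)) * (od n p 0 (fun _ => 1) + od n p 1 wf))
        * od n p 0 (fun i => (S i)⁻¹)
      = 1 - J := by
    rw [hLU, mul_add, mul_add, add_mul, add_mul, od_mul_od, od_mul_od, od0_mul_lo,
      od_mul_od, od_mul_od, lo_mul_od0]
    simp only [add_zero, zero_add, Nat.add_zero]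
    rw [show (fun i => S i * (1 - u i) * (S i)⁻¹) = (fun i : ℕ => 1 - B (i + 1))
        from funext idD2,
      show (fun i => S i * -v (i + 1) * (S (i + 1))⁻¹) = (fun i : ℕ => -(A (i + 1)))
        from funext idS2,
      show (fun i => S (i + 1) * -1 * (S i)⁻¹) = (fun i : ℕ => -((A (i + 1))ᴴ))
        from funext idL2]
    ext ⟨i, a⟩ ⟨j, b⟩
    simp only [Matrix.add_apply, DBJ.od, DBJ.lo, Matrix.of_apply, Matrix.sub_apply,
      Matrix.one_apply, hJ, Matrix.neg_apply, Prod.mk.injEq, add_zero, Fin.ext_iff]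
    split_ifs <;> first | omega | simp
  have hdetL : (od n p 0 Gf + lo n p (fun _ => (-1 : Matrix (Fin p) (Fin p) ℂ))).det
      = ∏ i : Fin n, (Gf (i : ℕ)).det := det_tri_lower Gf _
  have hdetU : (od n p 0 (fun _ => (1 : Matrix (Fin p) (Fin p) ℂ)) + od n p 1 wf).det = 1 := by
    rw [det_tri_upper]
    simp
  have hdd : (od n p 0 fun i => S i).det * (od n p 0 fun i => (S i)⁻¹).det = 1 := by
    rw [← Matrix.det_mul, hDmDi, Matrix.det_one]
  have hfinal : ((1 : Matrix (Fin n × Fin p) (Fin n × Fin p) ℂ) - J).det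
      = ∏ i : Fin n, (Gf (i : ℕ)).det := by
    rw [← hM, Matrix.det_mul, Matrix.det_mul, Matrix.det_mul, hdetL, hdetU, mul_one,
      mul_right_comm, hdd, one_mul]
  rw [hfinal]
  have hGdet : ∀ i : ℕ, (Gf i).det = if i = 0 then (1 - U 1).det
      else ((1 - U (2 * i)).det * (1 - U (2 * i + 1)).det) := by
    intro i
    by_cases h0 : i = 0
    · simp [hGfdef, h0]
    · simp [hGfdef, h0, Matrix.det_mul]
  calc (∏ i : Fin n, (Gf (i : ℕ)).det)
      = ∏ i ∈ Finset.range n, (Gf i).det :=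
        Fin.prod_univ_eq_prod_range (fun i => (Gf i).det) n
    _ = ∏ i ∈ Finset.range n, (if i = 0 then (1 - U 1).det
          else ((1 - U (2 * i)).det * (1 - U (2 * i + 1)).det)) :=
        Finset.prod_congr rfl (fun i _ => hGdet i)
    _ = ∏ k ∈ Finset.Icc 1 (2 * n - 1), (1 - U k).det :=
        prod_aux (fun k => (1 - U k).det) n hn
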